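/- arXiv:1209.5711 — 4 statements merged into one kernel-verified Lean document; each statement's English description precedes it below -/
import Mathlib

section
/- If (x1 + ω·x2, ω·x3) ∈ G2 for every ω with |ω| = 1, then x ∈ E. -/
open Complex

def tetrablockE : Set (ℂ × ℂ × ℂ) :=
  {x | ‖x.1 - (starRingEnd ℂ) x.2.1 * x.2.2‖ +
       ‖x.2.1 - (starRingEnd ℂ) x.1 * x.2.2‖ +
       ‖x.2.2‖ ^ 2 < 1}

def symBidisc : Set (ℂ × ℂ) :=
  {p | ‖p.1 - (starRingEnd ℂ) p.1 * p.2‖ + ‖p.2‖ ^ 2 < 1}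

theorem symBidisc_to_tetrablock (x : ℂ × ℂ × ℂ)
    (h : ∀ ω : ℂ, ‖ω‖ = 1 → (x.1 + ω * x.2.1, ω * x.2.2) ∈ symBidisc) :
    x ∈ tetrablockE := by
  set A := x.1 - (starRingEnd ℂ) x.2.1 * x.2.2 with hA
  set B := x.2.1 - (starRingEnd ℂ) x.1 * x.2.2 with hB
  have key : ∀ ω : ℂ, ‖ω‖ = 1 →
      ‖A + ω * B‖ + ‖x.2.2‖ ^ 2 < 1 := by
    intro ω hω
    have h1 := h ω hω
    simp only [symBidisc, Set.mem_setOf_eq] at h1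
    have hωc : (starRingEnd ℂ) ω * ω = 1 := by
      rw [mul_comm, Complex.mul_conj]
      norm_cast
      rw [← Complex.sq_norm, hω]; norm_num
    have heq : x.1 + ω * x.2.1 - (starRingEnd ℂ) (x.1 + ω * x.2.1) * (ω * x.2.2)
        = A + ω * B := by
      simp only [map_add, map_mul, hA, hB]
      linear_combination (-(x.2.2 * (starRingEnd ℂ) x.2.1)) * hωc
    rw [heq] at h1
    rwa [norm_mul, hω, one_mul] at h1
  show ‖A‖ + ‖B‖ + ‖x.2.2‖ ^ 2 < 1
  by_cases hA0 : A = 0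
  · have := key 1 (by simp)
    simpa [hA0] using this
  by_cases hB0 : B = 0
  · have := key 1 (by simp)
    simpa [hB0] using this
  · set ω : ℂ := A * (starRingEnd ℂ) B / ((‖A‖ : ℂ) * (‖B‖ : ℂ)) with hωdef
    have habsA : ‖A‖ ≠ 0 := by simpa using hA0
    have habsB : ‖B‖ ≠ 0 := by simpa using hB0
    have hωabs : ‖ω‖ = 1 := by
      rw [hωdef, norm_div, norm_mul, norm_mul, Complex.norm_conj, Complex.norm_real, Real.norm_eq_abs,
        Complex.norm_real, Real.norm_eq_abs, _root_.abs_of_nonneg (norm_nonneg A),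
        _root_.abs_of_nonneg (norm_nonneg B)]
      field_simp
    have hA' : (‖A‖ : ℂ) ≠ 0 := by exact_mod_cast habsA
    have hB' : (‖B‖ : ℂ) ≠ 0 := by exact_mod_cast habsB
    clear_value A B
    have hBB : (starRingEnd ℂ) B * B = ((‖B‖ : ℂ)) ^ 2 := by
      rw [mul_comm, Complex.mul_conj, Complex.normSq_eq_norm_sq]; norm_cast
    have hsum : A + ω * B = A * (1 + (‖B‖ : ℂ) / (‖A‖ : ℂ)) := by
      rw [hωdef]
      field_simp
      linear_combination hBB
    have habs : ‖A + ω * B‖ = ‖A‖ + ‖B‖ := by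
      rw [hsum, norm_mul]
      have : (1 : ℂ) + (‖B‖ : ℂ) / (‖A‖ : ℂ)
          = ((1 + ‖B‖ / ‖A‖ : ℝ) : ℂ) := by push_cast; ring
      rw [this, Complex.norm_real, Real.norm_eq_abs, _root_.abs_of_nonneg (by positivity)]
      field_simp
    have := key ω hωabs
    rwa [habs] at this
end

section
/- The tetrablock E is linearly convex: for every point x ∈ C^3 with x ∉ E, there exists a complex affine hyperplane L through x with L ∩ E = ∅. -/
open Complex

private lemma normSq_id1 (a b c z : ℂ) (hz : normSq z = 1) :
    normSq (1 - b*z) - normSq (a - c*z)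
      = 1 + normSq b - normSq a - normSq c - 2*(z*(b - (starRingEnd ℂ) a * c)).re := by
  have h : z.re*z.re + z.im*z.im = 1 := by simpa [normSq_apply] using hz
  simp only [normSq_apply, mul_re, mul_im, sub_re, sub_im, one_re, one_im, conj_re, conj_im]
  linear_combination (b.re*b.re + b.im*b.im - c.re*c.re - c.im*c.im) * h

private lemma normSq_id2 (a b c : ℂ) :
    (normSq b - normSq a) * (1 - normSq c)
      = normSq (b - (starRingEnd ℂ) a * c) - normSq (a - (starRingEnd ℂ) b * c) := by
  simp only [normSq_apply, mul_re, mul_im, sub_re, sub_im, conj_re, conj_im]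
  ring

private lemma absb_lt_one (a b c : ℂ)
    (h : ‖a - (starRingEnd ℂ) b * c‖ + ‖b - (starRingEnd ℂ) a * c‖
          + ‖c‖ ^ 2 < 1) :
    ‖b‖ < 1 := by
  have h1 : ‖b‖ ≤ ‖b - (starRingEnd ℂ) a * c‖ + ‖a‖ * ‖c‖ := by
    calc ‖b‖ = ‖(b - (starRingEnd ℂ) a * c) + (starRingEnd ℂ) a * c‖ := by
          ring_nf
      _ ≤ ‖b - (starRingEnd ℂ) a * c‖ + ‖(starRingEnd ℂ) a * c‖ :=
          norm_add_le _ _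
      _ = ‖b - (starRingEnd ℂ) a * c‖ + ‖a‖ * ‖c‖ := by
          rw [norm_mul, Complex.norm_conj]
  have h2 : ‖a‖ ≤ ‖a - (starRingEnd ℂ) b * c‖ + ‖b‖ * ‖c‖ := by
    calc ‖a‖ = ‖(a - (starRingEnd ℂ) b * c) + (starRingEnd ℂ) b * c‖ := by
          ring_nf
      _ ≤ ‖a - (starRingEnd ℂ) b * c‖ + ‖(starRingEnd ℂ) b * c‖ :=
          norm_add_le _ _
      _ = ‖a - (starRingEnd ℂ) b * c‖ + ‖b‖ * ‖c‖ := by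
          rw [norm_mul, Complex.norm_conj]
  have hA := norm_nonneg (a - (starRingEnd ℂ) b * c)
  have hB := norm_nonneg (b - (starRingEnd ℂ) a * c)
  have hc := norm_nonneg c
  have hb := norm_nonneg b
  have ha := norm_nonneg a
  have hr : ‖c‖ < 1 := by nlinarith
  nlinarith [mul_le_mul_of_nonneg_left h2 hc]

private lemma key2 (a b c z : ℂ)
    (h : ‖a - (starRingEnd ℂ) b * c‖ + ‖b - (starRingEnd ℂ) a * c‖
          + ‖c‖ ^ 2 < 1)
    (hz : ‖z‖ = 1) :
    ‖a - c*z‖ < ‖1 - b*z‖ := by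
  have hnz : normSq z = 1 := by rw [← Complex.sq_norm, hz]; norm_num
  have hid := normSq_id1 a b c z hnz
  have hid2 := normSq_id2 a b c
  have hre : (z*(b - (starRingEnd ℂ) a * c)).re ≤ ‖b - (starRingEnd ℂ) a * c‖ := by
    refine le_trans (Complex.re_le_norm _) ?_
    rw [norm_mul, hz, one_mul]
  have hA2 : normSq (a - (starRingEnd ℂ) b * c) = ‖a - (starRingEnd ℂ) b * c‖ ^ 2 :=
    (Complex.sq_norm _).symm
  have hB2 : normSq (b - (starRingEnd ℂ) a * c) = ‖b - (starRingEnd ℂ) a * c‖ ^ 2 :=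
    (Complex.sq_norm _).symm
  have hC2 : normSq c = ‖c‖ ^ 2 := (Complex.sq_norm c).symm
  have hA := norm_nonneg (a - (starRingEnd ℂ) b * c)
  have hB := norm_nonneg (b - (starRingEnd ℂ) a * c)
  have hc := norm_nonneg c
  have hs : 0 < 1 - normSq c := by rw [hC2]; nlinarith
  have hsd : 0 < 1 - normSq c - ‖b - (starRingEnd ℂ) a * c‖
      - ‖a - (starRingEnd ℂ) b * c‖ := by rw [hC2]; nlinarith
  have hkey : normSq (a - c*z) < normSq (1 - b*z) := by
    nlinarith [mul_pos hsd (by nlinarith : (0:ℝ) < 1 - normSq c - ‖b - (starRingEnd ℂ) a * c‖ + ‖a - (starRingEnd ℂ) b * c‖),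
      mul_nonneg hs.le (sub_nonneg.2 hre)]
  rw [Complex.norm_def, Complex.norm_def]
  exact Real.sqrt_lt_sqrt (normSq_nonneg _) hkey

private lemma aux_hyp (a b c : ℂ) (hr : ‖c‖ < 1)
    (hge : 1 ≤ ‖a - (starRingEnd ℂ) b * c‖ + ‖b - (starRingEnd ℂ) a * c‖
          + ‖c‖ ^ 2)
    (hBA : ‖b - (starRingEnd ℂ) a * c‖ ≤ ‖a - (starRingEnd ℂ) b * c‖) :
    ∃ p q u d : ℂ, (p, q, u) ≠ (0, 0, 0) ∧ p*a + q*b + u*c = d ∧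
      ∀ a' b' c' : ℂ,
        ‖a' - (starRingEnd ℂ) b' * c'‖ + ‖b' - (starRingEnd ℂ) a' * c'‖
          + ‖c'‖ ^ 2 < 1 → p*a' + q*b' + u*c' ≠ d := by
  set w : ℂ := b - (starRingEnd ℂ) a * c with hwdef
  set z : ℂ := if w = 0 then 1 else (starRingEnd ℂ) w / (‖w‖ : ℂ) with hzdef
  have hz : ‖z‖ = 1 := by
    by_cases hw : w = 0
    · simp [hzdef, hw]
    · have habsw : ‖w‖ ≠ 0 := by simpa using hw
      simp [hzdef, hw, norm_div, Complex.norm_conj, Complex.norm_real,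
        _root_.abs_of_nonneg (norm_nonneg w), div_self habsw]
  have hzw : z * w = (‖w‖ : ℂ) := by
    by_cases hw : w = 0
    · simp [hzdef, hw]
    · have habsw : (‖w‖ : ℂ) ≠ 0 := by
        simpa using hw
      have h1 : (starRingEnd ℂ) w * w = ((‖w‖ : ℂ))^2 := by
        rw [mul_comm, Complex.mul_conj, Complex.normSq_eq_norm_sq]
        push_cast; ring
      rw [hzdef, if_neg hw, div_mul_eq_mul_div, h1, sq,
        mul_div_assoc, div_self habsw, mul_one]
  have hnz : normSq z = 1 := by rw [← Complex.sq_norm, hz]; norm_num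
  have hid := normSq_id1 a b c z hnz
  have hid2 := normSq_id2 a b c
  have hre : (z * w).re = ‖w‖ := by rw [hzw]; simp
  have hA2 : normSq (a - (starRingEnd ℂ) b * c) = ‖a - (starRingEnd ℂ) b * c‖ ^ 2 :=
    (Complex.sq_norm _).symm
  have hB2 : normSq w = ‖w‖ ^ 2 := (Complex.sq_norm _).symm
  have hC2 : normSq c = ‖c‖ ^ 2 := (Complex.sq_norm c).symm
  have hA := norm_nonneg (a - (starRingEnd ℂ) b * c)
  have hB := norm_nonneg w
  have hcn := norm_nonneg c
  have hs : 0 < 1 - normSq c := by rw [hC2]; nlinarith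
  have h1 : 0 ≤ ‖a - (starRingEnd ℂ) b * c‖ - (1 - normSq c) + ‖w‖ := by
    rw [hC2]; nlinarith
  have h2 : 0 ≤ ‖a - (starRingEnd ℂ) b * c‖ + (1 - normSq c) - ‖w‖ := by
    nlinarith
  have hkey : normSq (1 - b*z) ≤ normSq (a - c*z) := by
    nlinarith [mul_nonneg h1 h2, hs]
  have habs : ‖1 - b*z‖ ≤ ‖a - c*z‖ := by
    rw [Complex.norm_def, Complex.norm_def]
    exact Real.sqrt_le_sqrt hkey
  by_cases hc : 1 - b*z = 0
  · have hz0 : z ≠ 0 := by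
      intro h0; rw [h0] at hz; simp at hz
    refine ⟨0, z, 0, 1, ?_, ?_, ?_⟩
    · simp [hz0]
    · have : b * z = 1 := by linear_combination -hc
      linear_combination this
    · intro a' b' c' h' heq
      have hb' : ‖b'‖ < 1 := absb_lt_one a' b' c' h'
      have : z * b' = 1 := by linear_combination heq
      have : ‖z * b'‖ = 1 := by rw [this]; simp
      rw [norm_mul, hz, one_mul] at this
      linarith
  · set l : ℂ := (a - c*z) / (1 - b*z) with hldef
    have hl2 : l * (1 - b*z) = a - c*z := div_mul_cancel₀ _ hc
    have hcpos : 0 < ‖1 - b*z‖ := by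
      simpa [norm_pos_iff] using hc
    have hl : 1 ≤ ‖l‖ := by
      rw [hldef, norm_div, le_div_iff₀ hcpos, one_mul]
      exact habs
    refine ⟨1, l*z, -z, l, ?_, ?_, ?_⟩
    · simp [Prod.ext_iff]
    · linear_combination -hl2
    · intro a' b' c' h' heq
      have h3 : a' - c'*z = l * (1 - b'*z) := by linear_combination heq
      have k := key2 a' b' c' z h' hz
      have h4 : ‖a' - c'*z‖ = ‖l‖ * ‖1 - b'*z‖ := by
        rw [h3, norm_mul]
      nlinarith [norm_nonneg (1 - b'*z)]

theorem tetrablock_linearly_convex (x : ℂ × ℂ × ℂ) (hx : x ∉ tetrablockE) :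
    ∃ a b c d : ℂ, (a, b, c) ≠ (0, 0, 0) ∧
      a * x.1 + b * x.2.1 + c * x.2.2 = d ∧
      ∀ y ∈ tetrablockE, a * y.1 + b * y.2.1 + c * y.2.2 ≠ d := by
  simp only [tetrablockE, Set.mem_setOf_eq, not_lt] at hx
  by_cases hr : ‖x.2.2‖ < 1
  · rcases le_or_gt (‖x.2.1 - (starRingEnd ℂ) x.1 * x.2.2‖)
      (‖x.1 - (starRingEnd ℂ) x.2.1 * x.2.2‖) with hBA | hAB
    · obtain ⟨p, q, u, d, hne, heq, hall⟩ := aux_hyp x.1 x.2.1 x.2.2 hr hx hBA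
      refine ⟨p, q, u, d, hne, heq, fun y hy => ?_⟩
      simp only [tetrablockE, Set.mem_setOf_eq] at hy
      exact hall y.1 y.2.1 y.2.2 hy
    · have hge' : 1 ≤ ‖x.2.1 - (starRingEnd ℂ) x.1 * x.2.2‖ +
          ‖x.1 - (starRingEnd ℂ) x.2.1 * x.2.2‖ + ‖x.2.2‖ ^ 2 := by
        linarith
      obtain ⟨p, q, u, d, hne, heq, hall⟩ := aux_hyp x.2.1 x.1 x.2.2 hr hge' hAB.le
      refine ⟨q, p, u, d, ?_, by linear_combination heq, fun y hy => ?_⟩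
      · simp only [ne_eq, Prod.mk.injEq] at hne ⊢
        tauto
      · simp only [tetrablockE, Set.mem_setOf_eq] at hy
        intro heq2
        exact hall y.2.1 y.1 y.2.2 (by linarith) (by linear_combination heq2)
  · refine ⟨0, 0, 1, x.2.2, by simp, by ring, fun y hy => ?_⟩
    simp only [tetrablockE, Set.mem_setOf_eq] at hy
    have h1 := norm_nonneg (y.1 - (starRingEnd ℂ) y.2.1 * y.2.2)
    have h2 := norm_nonneg (y.2.1 - (starRingEnd ℂ) y.1 * y.2.2)
    have h3 := norm_nonneg y.2.2
    have hy3 : ‖y.2.2‖ < 1 := by nlinarith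
    intro heq
    have : y.2.2 = x.2.2 := by linear_combination heq
    rw [this] at hy3
    linarith [not_lt.1 hr]
end

section
/- For r ∈ [0,1] and θ, τ ∈ R, the point (r·e^{iθ}, r·e^{iτ}, e^{i(θ+τ)}) lies in the closure of E but not in E, i.e. it is a boundary point of the tetrablock. -/
open Complex Filter Topology

lemma conj_mul_exp (r φ ψ : ℝ) : (starRingEnd ℂ) ((r:ℂ) * Complex.exp (ψ * I)) * Complex.exp ((φ + ψ : ℝ) * I) = (r:ℂ) * Complex.exp (φ * I) := by
  rw [map_mul, Complex.conj_ofReal, mul_assoc, ← Complex.exp_conj, ← Complex.exp_add]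
  congr 2
  simp [Complex.conj_I]
  ring

theorem boundary_point_of_tetrablock (r : ℝ) (hr0 : 0 ≤ r) (hr1 : r ≤ 1) (θ τ : ℝ) :
    ((r : ℂ) * Complex.exp (θ * Complex.I),
     (r : ℂ) * Complex.exp (τ * Complex.I),
     Complex.exp ((θ + τ : ℝ) * Complex.I)) ∈
      closure tetrablockE \ tetrablockE := by
  set x1 : ℂ := (r : ℂ) * Complex.exp (θ * Complex.I) with hx1
  set x2 : ℂ := (r : ℂ) * Complex.exp (τ * Complex.I) with hx2
  set x3 : ℂ := Complex.exp ((θ + τ : ℝ) * Complex.I) with hx3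
  have h12 : (starRingEnd ℂ) x2 * x3 = x1 := conj_mul_exp r θ τ
  have h21 : (starRingEnd ℂ) x1 * x3 = x2 := by
    rw [hx1, hx2, hx3, show ((θ + τ : ℝ) : ℂ) = ((τ + θ : ℝ) : ℂ) by push_cast; ring]
    exact conj_mul_exp r τ θ
  have habs3 : ‖x3‖ = 1 := Complex.norm_exp_ofReal_mul_I _
  have habs1 : ‖x1‖ = r := by
    rw [hx1, norm_mul, Complex.norm_real, Real.norm_eq_abs, Complex.norm_exp_ofReal_mul_I, mul_one,
      _root_.abs_of_nonneg hr0]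
  have habs2 : ‖x2‖ = r := by
    rw [hx2, norm_mul, Complex.norm_real, Real.norm_eq_abs, Complex.norm_exp_ofReal_mul_I, mul_one,
      _root_.abs_of_nonneg hr0]
  constructor
  · -- closure
    have hmem : ∀ t : ℝ, t ∈ Set.Ioo (0:ℝ) 1 →
        ((t:ℂ) * x1, (t:ℂ) * x2, (t:ℂ) * x3) ∈ tetrablockE := by
      intro t ht
      obtain ⟨ht0, ht1⟩ := ht
      have htt : (0:ℝ) ≤ t - t^2 := by nlinarith
      simp only [tetrablockE, Set.mem_setOf_eq]
      have e1 : (t:ℂ) * x1 - (starRingEnd ℂ) ((t:ℂ) * x2) * ((t:ℂ) * x3)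
          = ((t - t^2 : ℝ) : ℂ) * x1 := by
        rw [map_mul, Complex.conj_ofReal]
        push_cast
        rw [show (t:ℂ) * (starRingEnd ℂ) x2 * ((t:ℂ) * x3)
            = (t:ℂ)^2 * ((starRingEnd ℂ) x2 * x3) by ring, h12]
        ring
      have e2 : (t:ℂ) * x2 - (starRingEnd ℂ) ((t:ℂ) * x1) * ((t:ℂ) * x3)
          = ((t - t^2 : ℝ) : ℂ) * x2 := by
        rw [map_mul, Complex.conj_ofReal]
        push_cast
        rw [show (t:ℂ) * (starRingEnd ℂ) x1 * ((t:ℂ) * x3)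
            = (t:ℂ)^2 * ((starRingEnd ℂ) x1 * x3) by ring, h21]
        ring
      rw [e1, e2]
      simp only [norm_mul, habs3, Complex.norm_real, Real.norm_eq_abs, Complex.norm_exp_ofReal_mul_I,
        _root_.abs_of_nonneg htt, _root_.abs_of_nonneg ht0.le, _root_.abs_of_nonneg hr0,
        mul_one]
      nlinarith
    have hne : (𝓝[Set.Ioo (0:ℝ) 1] 1).NeBot := by
      rw [mem_closure_iff_nhdsWithin_neBot.symm, closure_Ioo one_ne_zero.symm]
      exact Set.right_mem_Icc.2 zero_le_one
    have hcont : Tendsto (fun t : ℝ => ((t:ℂ) * x1, (t:ℂ) * x2, (t:ℂ) * x3))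
        (𝓝[Set.Ioo (0:ℝ) 1] 1) (𝓝 (x1, x2, x3)) := by
      have : Continuous (fun t : ℝ => ((t:ℂ) * x1, (t:ℂ) * x2, (t:ℂ) * x3)) := by
        continuity
      have h := ((this.tendsto 1).mono_left
        (nhdsWithin_le_nhds (s := Set.Ioo (0:ℝ) 1)))
      simpa using h
    exact mem_closure_of_tendsto hcont
      (eventually_nhdsWithin_of_forall hmem)
  · -- not in E
    intro h
    simp only [tetrablockE, Set.mem_setOf_eq] at h
    rw [h12, h21, sub_self, sub_self, habs3] at h
    simp at h
end

section
/- If x lies on the boundary of the tetrablock E and x1 = conj(x2)·x3, then either x = (r·e^{iθ}, r·e^{iτ}, e^{i(θ+τ)}) for some r ∈ [0,1], θ, τ ∈ R, or x = (e^{iθ}, r·e^{iτ}, r·e^{i(θ+τ)}) for some r ∈ [0,1], θ, τ ∈ R, or x = (r·e^{iθ}, e^{iτ}, r·e^{i(θ+τ)}) for some r ∈ [0,1], θ, τ ∈ R. -/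
open Complex

private lemma aux_cont : Continuous (fun y : ℂ × ℂ × ℂ =>
    ‖y.1 - (starRingEnd ℂ) y.2.1 * y.2.2‖ +
    ‖y.2.1 - (starRingEnd ℂ) y.1 * y.2.2‖ +
    (‖y.2.2‖) ^ 2) := by
  refine ((continuous_norm.comp ?_).add (continuous_norm.comp ?_)).add
    ((continuous_norm.comp ?_).pow 2)
  · exact continuous_fst.sub ((continuous_conj.comp (continuous_fst.comp continuous_snd)).mul
      (continuous_snd.comp continuous_snd))
  · exact (continuous_fst.comp continuous_snd).sub ((continuous_conj.comp continuous_fst).mul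
      (continuous_snd.comp continuous_snd))
  · exact continuous_snd.comp continuous_snd

private lemma aux_b_le (x : ℂ × ℂ × ℂ) (hx : x ∈ tetrablockE) : ‖x.2.1‖ ≤ 1 := by
  obtain ⟨x1, x2, x3⟩ := x
  simp only [tetrablockE, Set.mem_setOf_eq] at hx
  have hb : ‖x2‖ ≤ ‖x2 - (starRingEnd ℂ) x1 * x3‖
      + ‖x1‖ * ‖x3‖ := by
    calc ‖x2‖
        = ‖(x2 - (starRingEnd ℂ) x1 * x3) + (starRingEnd ℂ) x1 * x3‖ := by ring_nf
      _ ≤ _ := by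
          refine (norm_add_le _ _).trans ?_
          simp [norm_mul]
  have ha : ‖x1‖ ≤ ‖x1 - (starRingEnd ℂ) x2 * x3‖
      + ‖x2‖ * ‖x3‖ := by
    calc ‖x1‖
        = ‖(x1 - (starRingEnd ℂ) x2 * x3) + (starRingEnd ℂ) x2 * x3‖ := by ring_nf
      _ ≤ _ := by
          refine (norm_add_le _ _).trans ?_
          simp [norm_mul]
  have h1 := norm_nonneg (x1 - (starRingEnd ℂ) x2 * x3)
  have h2 := norm_nonneg (x2 - (starRingEnd ℂ) x1 * x3)
  have h3 := norm_nonneg x3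
  have h4 := norm_nonneg x1
  have h5 := norm_nonneg x2
  have hc1 : ‖x3‖ < 1 := by nlinarith
  nlinarith [mul_nonneg h2 h3, mul_nonneg h1 h3]

theorem boundary_degenerate_points (x : ℂ × ℂ × ℂ)
    (hx : x ∈ closure tetrablockE \ tetrablockE)
    (h : x.1 = (starRingEnd ℂ) x.2.1 * x.2.2) :
    (∃ r : ℝ, ∃ θ τ : ℝ, 0 ≤ r ∧ r ≤ 1 ∧
      x = ((r : ℂ) * Complex.exp (θ * Complex.I),
           (r : ℂ) * Complex.exp (τ * Complex.I),
           Complex.exp ((θ + τ : ℝ) * Complex.I))) ∨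
    (∃ r : ℝ, ∃ θ τ : ℝ, 0 ≤ r ∧ r ≤ 1 ∧
      x = (Complex.exp (θ * Complex.I),
           (r : ℂ) * Complex.exp (τ * Complex.I),
           (r : ℂ) * Complex.exp ((θ + τ : ℝ) * Complex.I))) ∨
    (∃ r : ℝ, ∃ θ τ : ℝ, 0 ≤ r ∧ r ≤ 1 ∧
      x = ((r : ℂ) * Complex.exp (θ * Complex.I),
           Complex.exp (τ * Complex.I),
           (r : ℂ) * Complex.exp ((θ + τ : ℝ) * Complex.I))) := by
  obtain ⟨hcl, hne⟩ := hx
  have hF1 : ‖x.1 - (starRingEnd ℂ) x.2.1 * x.2.2‖ +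
      ‖x.2.1 - (starRingEnd ℂ) x.1 * x.2.2‖ +
      (‖x.2.2‖) ^ 2 ≤ 1 := by
    have hsub : closure tetrablockE ⊆ {y : ℂ × ℂ × ℂ |
        ‖y.1 - (starRingEnd ℂ) y.2.1 * y.2.2‖ +
        ‖y.2.1 - (starRingEnd ℂ) y.1 * y.2.2‖ +
        (‖y.2.2‖) ^ 2 ≤ 1} := by
      refine closure_minimal (fun y hy => ?_) (isClosed_le aux_cont continuous_const)
      have hy' : ‖y.1 - (starRingEnd ℂ) y.2.1 * y.2.2‖ +
          ‖y.2.1 - (starRingEnd ℂ) y.1 * y.2.2‖ +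
          (‖y.2.2‖) ^ 2 < 1 := hy
      exact le_of_lt hy'
    exact hsub hcl
  have hb1 : ‖x.2.1‖ ≤ 1 := by
    have hsub : closure tetrablockE ⊆ {y : ℂ × ℂ × ℂ | ‖y.2.1‖ ≤ 1} :=
      closure_minimal aux_b_le (isClosed_le
        (continuous_norm.comp (continuous_fst.comp continuous_snd)) continuous_const)
    exact hsub hcl
  have hFge : 1 ≤ ‖x.1 - (starRingEnd ℂ) x.2.1 * x.2.2‖ +
      ‖x.2.1 - (starRingEnd ℂ) x.1 * x.2.2‖ +
      (‖x.2.2‖) ^ 2 := by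
    by_contra hcon
    exact hne (by simpa [tetrablockE] using lt_of_not_ge hcon)
  set b := ‖x.2.1‖ with hbdef
  set c := ‖x.2.2‖ with hcdef
  have hA1 : ‖x.1 - (starRingEnd ℂ) x.2.1 * x.2.2‖ = 0 := by
    rw [h]; simp
  have hkey : x.2.1 - (starRingEnd ℂ) x.1 * x.2.2 = x.2.1 * (1 - ((c : ℂ)) ^ 2) := by
    rw [h, map_mul, Complex.conj_conj]
    have hcc : x.2.2 * (starRingEnd ℂ) x.2.2 = ((c : ℂ)) ^ 2 := by
      rw [Complex.mul_conj, hcdef, Complex.normSq_eq_norm_sq]; push_cast; ring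
    linear_combination -x.2.1 * hcc
  have hc1 : c ≤ 1 := by
    have hcnn : 0 ≤ c := norm_nonneg _
    nlinarith [norm_nonneg (x.1 - (starRingEnd ℂ) x.2.1 * x.2.2),
      norm_nonneg (x.2.1 - (starRingEnd ℂ) x.1 * x.2.2)]
  have hA2 : ‖x.2.1 - (starRingEnd ℂ) x.1 * x.2.2‖ = b * (1 - c ^ 2) := by
    rw [hkey, norm_mul, ← hbdef]
    congr 1
    rw [← Complex.ofReal_one, ← Complex.ofReal_pow, ← Complex.ofReal_sub,
      Complex.norm_of_nonneg (by nlinarith [norm_nonneg x.2.2] : (0:ℝ) ≤ 1 - c ^ 2)]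
  rw [hA1, hA2] at hF1 hFge
  have heq : (1 - b) * (1 - c ^ 2) = 0 := by nlinarith
  have hbnn : 0 ≤ b := norm_nonneg _
  have hcnn : 0 ≤ c := norm_nonneg _
  rcases mul_eq_zero.mp heq with hb | hc
  · -- b = 1 : third branch
    right; right
    have hb' : b = 1 := by linarith
    refine ⟨c, Complex.arg x.2.2 - Complex.arg x.2.1, Complex.arg x.2.1, hcnn, hc1, ?_⟩
    have e2 : x.2.1 = Complex.exp ((Complex.arg x.2.1 : ℂ) * Complex.I) := by
      conv_lhs => rw [← Complex.norm_mul_exp_arg_mul_I x.2.1]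
      rw [← hbdef, hb']; simp
    have e3 : x.2.2 = (c : ℂ) * Complex.exp
        (((Complex.arg x.2.2 - Complex.arg x.2.1 + Complex.arg x.2.1 : ℝ)) * Complex.I) := by
      conv_lhs => rw [← Complex.norm_mul_exp_arg_mul_I x.2.2]
      rw [← hcdef]; ring_nf
    have h2 : (starRingEnd ℂ) x.2.1 = Complex.exp (-((Complex.arg x.2.1 : ℂ) * Complex.I)) := by
      conv_lhs => rw [e2]
      rw [← Complex.exp_conj]
      congr 1
      rw [map_mul, Complex.conj_ofReal, Complex.conj_I]
      ring
    have e1 : x.1 = (c : ℂ) * Complex.exp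
        (((Complex.arg x.2.2 - Complex.arg x.2.1 : ℝ)) * Complex.I) := by
      rw [h, h2]
      conv_lhs => rw [e3]
      rw [mul_left_comm, ← Complex.exp_add]
      congr 2
      push_cast; ring
    exact Prod.ext e1 (Prod.ext e2 e3)
  · -- c = 1 : first branch
    left
    have hc' : c = 1 := by nlinarith
    refine ⟨b, Complex.arg x.2.2 - Complex.arg x.2.1, Complex.arg x.2.1, hbnn, hb1, ?_⟩
    have e2 : x.2.1 = (b : ℂ) * Complex.exp ((Complex.arg x.2.1 : ℂ) * Complex.I) := by
      conv_lhs => rw [← Complex.norm_mul_exp_arg_mul_I x.2.1]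
    have e3 : x.2.2 = Complex.exp
        (((Complex.arg x.2.2 - Complex.arg x.2.1 + Complex.arg x.2.1 : ℝ)) * Complex.I) := by
      conv_lhs => rw [← Complex.norm_mul_exp_arg_mul_I x.2.2]
      rw [← hcdef, hc']
      ring_nf
      norm_num
    have h2 : (starRingEnd ℂ) x.2.1 =
        (b : ℂ) * Complex.exp (-((Complex.arg x.2.1 : ℂ) * Complex.I)) := by
      conv_lhs => rw [e2]
      rw [map_mul, Complex.conj_ofReal, ← Complex.exp_conj]
      congr 1
      rw [map_mul, Complex.conj_ofReal, Complex.conj_I]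
      ring
    have e1 : x.1 = (b : ℂ) * Complex.exp
        (((Complex.arg x.2.2 - Complex.arg x.2.1 : ℝ)) * Complex.I) := by
      rw [h, h2]
      conv_lhs => rw [e3]
      rw [mul_assoc, ← Complex.exp_add]
      congr 2
      push_cast; ring
    exact Prod.ext e1 (Prod.ext e2 e3)
end
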